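/- With the notation of the context: 𝒜⁻¹(im F_{n,[ℰ,Â]}) ∩ ker 𝒞 ∩ ker F_{n,[Ē,Ā]} ⊆ ker 𝒦 (as subspaces of ℝ^{nn}) if and only if 𝒜₁⁻¹(im F_{n,[ℰ,Â]}) ∩ W*_{[E,A,0,C]} ⊆ ker K (as subspaces of ℝ^n). -/

import Mathlib

open Matrix

/-- The block matrix `F_{k,[E,A]}`: viewed as a `k × k` array of `m × n` blocks,
diagonal blocks equal `E`, superdiagonal blocks equal `A`, all other blocks zero. -/
noncomputable def Fmat (k : ℕ) {R C : Type*} [Fintype R] [Fintype C]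
    (E A : Matrix R C ℝ) : Matrix (Fin k × R) (Fin k × C) ℝ :=
  Matrix.of fun p q =>
    if q.1.val = p.1.val then E p.2 q.2
    else if q.1.val = p.1.val + 1 then A p.2 q.2
    else 0

/-- The matrix `F_{k,[E,A,K]}`: `F_{k,[E,A]}` with an extra block row appended at the
bottom, having `K` in the second block column and zeros elsewhere. -/
noncomputable def FmatK (k : ℕ) {R C : Type*} [Fintype R] [Fintype C] {r : ℕ}
    (E A : Matrix R C ℝ) (K : Matrix (Fin r) C ℝ) :
    Matrix ((Fin k × R) ⊕ Fin r) (Fin k × C) ℝ :=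
  Matrix.of fun p q =>
    match p with
    | Sum.inl pr => Fmat k E A pr q
    | Sum.inr i => if q.1.val = 1 then K i q.2 else 0

/-- The generalized Wong sequence `W^i_{[E,A,B,C]}`:
`W⁰ = {0}`, `W^{i+1} = E⁻¹(A·W^i + im B) ∩ ker C`. -/
noncomputable def WongW {R : Type*} [Fintype R] {n l p : ℕ}
    (E A : Matrix R (Fin n) ℝ) (B : Matrix R (Fin l) ℝ) (C : Matrix (Fin p) (Fin n) ℝ) :
    ℕ → Submodule ℝ (Fin n → ℝ)
  | 0 => ⊥
  | i + 1 =>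
      (Submodule.comap E.mulVecLin
        (Submodule.map A.mulVecLin (WongW E A B C i) ⊔ LinearMap.range B.mulVecLin)) ⊓
        LinearMap.ker C.mulVecLin

/-- The generalized Wong sequence `V^i_{[E,A,B,C]}`:
`V⁰ = ker C`, `V^{i+1} = A⁻¹(E·V^i + im B) ∩ ker C`. -/
noncomputable def WongV {R : Type*} [Fintype R] {n l p : ℕ}
    (E A : Matrix R (Fin n) ℝ) (B : Matrix R (Fin l) ℝ) (C : Matrix (Fin p) (Fin n) ℝ) :
    ℕ → Submodule ℝ (Fin n → ℝ)
  | 0 => LinearMap.ker C.mulVecLin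
  | i + 1 =>
      (Submodule.comap A.mulVecLin
        (Submodule.map E.mulVecLin (WongV E A B C i) ⊔ LinearMap.range B.mulVecLin)) ⊓
        LinearMap.ker C.mulVecLin

/-- The block matrix `𝒜`, an `n × n` array of `m × n` blocks with `A` in block
position `(n,1)` and zeros elsewhere. -/
noncomputable def calA {m n : ℕ} (A : Matrix (Fin m) (Fin n) ℝ) :
    Matrix (Fin n × Fin m) (Fin n × Fin n) ℝ :=
  Matrix.of fun p q => if p.1.val = n - 1 ∧ q.1.val = 0 then A p.2 q.2 else 0

/-- The block column `𝒜₁`, an `n × 1` array of `m × n` blocks with `A` in the bottom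
block and zeros above. -/
noncomputable def calA1 {m n : ℕ} (A : Matrix (Fin m) (Fin n) ℝ) :
    Matrix (Fin n × Fin m) (Fin n) ℝ :=
  Matrix.of fun p j => if p.1.val = n - 1 then A p.2 j else 0

/-- The block row `[K 0 … 0]` (`k` block columns) with `K` in the first block column. -/
noncomputable def firstBlockCol {r n : ℕ} (k : ℕ) (K : Matrix (Fin r) (Fin n) ℝ) :
    Matrix (Fin r) (Fin k × Fin n) ℝ :=
  Matrix.of fun i q => if q.1.val = 0 then K i q.2 else 0

-- sum helpers
lemma sum_ite_val {k : ℕ} (i : Fin k) (f : Fin k → ℝ) :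
    ∑ q : Fin k, (if (q : ℕ) = (i : ℕ) then f q else 0) = f i := by
  simp [Fin.val_eq_val, Finset.sum_ite_eq']

lemma sum_ite_val_succ {k : ℕ} (i : Fin k) (f : Fin k → ℝ) :
    ∑ q : Fin k, (if (q : ℕ) = (i : ℕ) + 1 then f q else 0) =
      if h : (i : ℕ) + 1 < k then f ⟨(i : ℕ) + 1, h⟩ else 0 := by
  split_ifs with h
  · rw [Finset.sum_eq_single (⟨(i : ℕ) + 1, h⟩ : Fin k)]
    · simp
    · intro q _ hq
      rw [if_neg]
      intro hv
      exact hq (Fin.ext hv)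
    · simp
  · apply Finset.sum_eq_zero
    intro q _
    rw [if_neg]
    have := q.isLt
    omega

lemma fmat_mulVec {k nn : ℕ} {R' : Type*} [Fintype R'] (E' A' : Matrix R' (Fin nn) ℝ)
    (y : Fin k × Fin nn → ℝ) (i : Fin k) (a : R') :
    (Fmat k E' A').mulVec y (i, a) =
      E'.mulVec (fun j => y (i, j)) a +
      (if h : (i : ℕ) + 1 < k then A'.mulVec (fun j => y (⟨(i : ℕ) + 1, h⟩, j)) a else 0) := by
  classical
  simp only [Matrix.mulVec, dotProduct, Fmat, Matrix.of_apply]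
  rw [Fintype.sum_prod_type]
  have step : ∀ q1 : Fin k,
      (∑ q2, (if (q1 : ℕ) = (i : ℕ) then E' a q2
        else if (q1 : ℕ) = (i : ℕ) + 1 then A' a q2 else 0) * y (q1, q2))
      = (if (q1 : ℕ) = (i : ℕ) then ∑ q2, E' a q2 * y (q1, q2) else 0)
        + (if (q1 : ℕ) = (i : ℕ) + 1 then ∑ q2, A' a q2 * y (q1, q2) else 0) := by
    intro q1
    split_ifs with h1 h2 h2
    · omega
    · simp
    · simp
    · simp
  rw [Finset.sum_congr rfl (fun q1 _ => step q1), Finset.sum_add_distrib,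
    sum_ite_val i (fun q1 => ∑ q2, E' a q2 * y (q1, q2)),
    sum_ite_val_succ i (fun q1 => ∑ q2, A' a q2 * y (q1, q2))]

lemma calA_mulVec {m n : ℕ} (hn : 0 < n) (A : Matrix (Fin m) (Fin n) ℝ)
    (y : Fin n × Fin n → ℝ) :
    (calA A).mulVec y = (calA1 A).mulVec (fun j => y (⟨0, hn⟩, j)) := by
  funext q
  obtain ⟨i, a⟩ := q
  simp only [Matrix.mulVec, dotProduct, calA, calA1, Matrix.of_apply]
  rw [Fintype.sum_prod_type]
  by_cases h : (i : ℕ) = n - 1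
  · simp only [h, true_and]
    have step : ∀ q1 : Fin n,
        (∑ q2, (if (q1 : ℕ) = 0 then A a q2 else 0) * y (q1, q2))
        = (if (q1 : ℕ) = ((⟨0, hn⟩ : Fin n) : ℕ) then ∑ q2, A a q2 * y (q1, q2) else 0) := by
      intro q1
      split_ifs with h1 <;> simp
    rw [Finset.sum_congr rfl (fun q1 _ => step q1),
      sum_ite_val (⟨0, hn⟩ : Fin n) (fun q1 => ∑ q2, A a q2 * y (q1, q2))]
    simp
  · simp [h]

lemma firstBlockCol_mulVec {r nn k : ℕ} (hk : 0 < k) (K : Matrix (Fin r) (Fin nn) ℝ)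
    (y : Fin k × Fin nn → ℝ) :
    (firstBlockCol k K).mulVec y = K.mulVec (fun j => y (⟨0, hk⟩, j)) := by
  funext b
  simp only [Matrix.mulVec, dotProduct, firstBlockCol, Matrix.of_apply]
  rw [Fintype.sum_prod_type]
  have step : ∀ q1 : Fin k,
      (∑ q2, (if (q1 : ℕ) = 0 then K b q2 else 0) * y (q1, q2))
      = (if (q1 : ℕ) = ((⟨0, hk⟩ : Fin k) : ℕ) then ∑ q2, K b q2 * y (q1, q2) else 0) := by
    intro q1
    split_ifs with h1 <;> simp
  rw [Finset.sum_congr rfl (fun q1 _ => step q1),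
    sum_ite_val (⟨0, hk⟩ : Fin k) (fun q1 => ∑ q2, K b q2 * y (q1, q2))]

section Wong
variable {m n p : ℕ} (E A : Matrix (Fin m) (Fin n) ℝ) (C : Matrix (Fin p) (Fin n) ℝ)

lemma wongW_succ (i : ℕ) :
    WongW E A (0 : Matrix (Fin m) (Fin 1) ℝ) C (i + 1) =
      Submodule.comap E.mulVecLin
        (Submodule.map A.mulVecLin (WongW E A (0 : Matrix (Fin m) (Fin 1) ℝ) C i)) ⊓
        LinearMap.ker C.mulVecLin := by
  show (Submodule.comap E.mulVecLin
        (Submodule.map A.mulVecLin (WongW E A (0 : Matrix (Fin m) (Fin 1) ℝ) C i) ⊔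
          LinearMap.range (0 : Matrix (Fin m) (Fin 1) ℝ).mulVecLin)) ⊓
        LinearMap.ker C.mulVecLin = _
  rw [Matrix.mulVecLin_zero, LinearMap.range_zero, sup_bot_eq]

lemma mem_wongW_succ {v : Fin n → ℝ} {i : ℕ} :
    v ∈ WongW E A (0 : Matrix (Fin m) (Fin 1) ℝ) C (i + 1) ↔
      (∃ w ∈ WongW E A (0 : Matrix (Fin m) (Fin 1) ℝ) C i, A.mulVec w = E.mulVec v) ∧
        C.mulVec v = 0 := by
  rw [wongW_succ, Submodule.mem_inf, Submodule.mem_comap, LinearMap.mem_ker,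
    Matrix.mulVecLin_apply, Submodule.mem_map]
  simp only [Matrix.mulVecLin_apply]

lemma wongW_le_succ : ∀ i, WongW E A (0 : Matrix (Fin m) (Fin 1) ℝ) C i ≤
    WongW E A (0 : Matrix (Fin m) (Fin 1) ℝ) C (i + 1)
  | 0 => bot_le
  | i + 1 => by
      rw [wongW_succ, wongW_succ]
      exact inf_le_inf_right _
        (Submodule.comap_mono (Submodule.map_mono (wongW_le_succ i)))

lemma wongW_mono : Monotone (WongW E A (0 : Matrix (Fin m) (Fin 1) ℝ) C) :=
  monotone_nat_of_le_succ (wongW_le_succ E A C)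

lemma wongW_stab {i : ℕ}
    (h : WongW E A (0 : Matrix (Fin m) (Fin 1) ℝ) C i =
      WongW E A (0 : Matrix (Fin m) (Fin 1) ℝ) C (i + 1)) :
    ∀ j, i ≤ j → WongW E A (0 : Matrix (Fin m) (Fin 1) ℝ) C j =
      WongW E A (0 : Matrix (Fin m) (Fin 1) ℝ) C i := by
  intro j hj
  induction j with
  | zero => rw [Nat.le_zero.mp hj]
  | succ j ih =>
      rcases Nat.lt_or_ge i (j + 1) with hij | hij
      · have hje := ih (by omega)
        rw [wongW_succ, hje, ← wongW_succ, ← h]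
      · have : i = j + 1 := by omega
        rw [this]

lemma wongW_sup :
    (⨆ i, WongW E A (0 : Matrix (Fin m) (Fin 1) ℝ) C i) =
      WongW E A (0 : Matrix (Fin m) (Fin 1) ℝ) C n := by
  have key : ∃ i ≤ n, WongW E A (0 : Matrix (Fin m) (Fin 1) ℝ) C i =
      WongW E A (0 : Matrix (Fin m) (Fin 1) ℝ) C (i + 1) := by
    by_contra hcon
    push_neg at hcon
    have hrank : ∀ i, i ≤ n + 1 →
        i ≤ Module.finrank ℝ (WongW E A (0 : Matrix (Fin m) (Fin 1) ℝ) C i) := by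
      intro i
      induction i with
      | zero => intro _; omega
      | succ i ih =>
          intro hi
          have h1 := ih (by omega)
          have hlt : WongW E A (0 : Matrix (Fin m) (Fin 1) ℝ) C i <
              WongW E A (0 : Matrix (Fin m) (Fin 1) ℝ) C (i + 1) :=
            lt_of_le_of_ne (wongW_le_succ E A C i) (hcon i (by omega))
          have h2 := Submodule.finrank_lt_finrank_of_lt hlt
          omega
    have h3 := hrank (n + 1) le_rfl
    have h4 : Module.finrank ℝ
        (WongW E A (0 : Matrix (Fin m) (Fin 1) ℝ) C (n + 1)) ≤
        Module.finrank ℝ (Fin n → ℝ) := Submodule.finrank_le _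
    rw [Module.finrank_fin_fun] at h4
    omega
  obtain ⟨i, hin, hstab⟩ := key
  apply le_antisymm
  · apply iSup_le
    intro j
    rcases le_or_gt j n with hj | hj
    · exact wongW_mono E A C hj
    · rw [wongW_stab E A C hstab j (by omega)]
      exact wongW_mono E A C hin
  · exact le_iSup _ n

lemma chain_mem : ∀ (k : ℕ) (z : ℕ → Fin n → ℝ),
    (∀ i, C.mulVec (z i) = 0) → (∀ i, E.mulVec (z i) + A.mulVec (z (i + 1)) = 0) →
    ∀ i, (∀ j, i + k ≤ j → z j = 0) →
      z i ∈ WongW E A (0 : Matrix (Fin m) (Fin 1) ℝ) C k := by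
  intro k
  induction k with
  | zero =>
      intro z h1 h2 i h3
      have hz := h3 i (by omega)
      rw [hz]
      exact Submodule.zero_mem _
  | succ k ih =>
      intro z h1 h2 i h3
      rw [mem_wongW_succ]
      refine ⟨⟨-(z (i + 1)), ?_, ?_⟩, h1 i⟩
      · exact neg_mem (ih z h1 h2 (i + 1) (fun j hj => h3 j (by omega)))
      · have := h2 i
        rw [Matrix.mulVec_neg]
        linear_combination (norm := module) -this

lemma chain_exists : ∀ (k : ℕ) (v : Fin n → ℝ),
    v ∈ WongW E A (0 : Matrix (Fin m) (Fin 1) ℝ) C k →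
    ∃ z : ℕ → Fin n → ℝ, z 0 = v ∧ (∀ i, C.mulVec (z i) = 0) ∧
      (∀ i, E.mulVec (z i) + A.mulVec (z (i + 1)) = 0) ∧ (∀ j, k ≤ j → z j = 0) := by
  intro k
  induction k with
  | zero =>
      intro v hv
      have : v = 0 := by simpa [WongW] using hv
      exact ⟨fun _ => 0, by rw [this], fun i => by simp [Matrix.mulVec_zero],
        fun i => by simp [Matrix.mulVec_zero], fun _ _ => rfl⟩
  | succ k ih =>
      intro v hv
      rw [mem_wongW_succ] at hv
      obtain ⟨⟨w, hw, hAw⟩, hCv⟩ := hv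
      obtain ⟨z', hz0, hz1, hz2, hz3⟩ := ih (-w) (neg_mem hw)
      refine ⟨fun i => match i with | 0 => v | (i + 1) => z' i, rfl, ?_, ?_, ?_⟩
      · intro i
        match i with
        | 0 => exact hCv
        | (i + 1) => exact hz1 i
      · intro i
        match i with
        | 0 =>
            show E.mulVec v + A.mulVec (z' 0) = 0
            rw [hz0, Matrix.mulVec_neg, ← hAw]
            abel
        | (i + 1) => exact hz2 i
      · intro j hj
        match j with
        | (j + 1) => exact hz3 j (by omega)

end Wong

/-- Equivalence of statements (ii) and (iii) of Theorem 3.10: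
`𝒜⁻¹(im F_{n,[ℰ,Â]}) ∩ ker 𝒞 ∩ ker F_{n,[Ē,Ā]} ⊆ ker 𝒦` iff
`𝒜₁⁻¹(im F_{n,[ℰ,Â]}) ∩ W*_{[E,A,0,C]} ⊆ ker K`. -/
theorem stmt_7 {m n l p r : ℕ} (hn : 1 ≤ n)
    (E A : Matrix (Fin m) (Fin n) ℝ) (B : Matrix (Fin m) (Fin l) ℝ)
    (C : Matrix (Fin p) (Fin n) ℝ) (K : Matrix (Fin r) (Fin n) ℝ) :
    (Submodule.comap (calA A).mulVecLin
        (LinearMap.range (Fmat n (Matrix.fromCols E (0 : Matrix (Fin m) (Fin l) ℝ))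
          (Matrix.fromCols A B)).mulVecLin) ⊓
      LinearMap.ker (firstBlockCol n C).mulVecLin ⊓
      LinearMap.ker (Fmat n (Matrix.fromRows E (0 : Matrix (Fin p) (Fin n) ℝ))
        (Matrix.fromRows A C)).mulVecLin ≤
      LinearMap.ker (firstBlockCol n K).mulVecLin) ↔
    (Submodule.comap (calA1 A).mulVecLin
        (LinearMap.range (Fmat n (Matrix.fromCols E (0 : Matrix (Fin m) (Fin l) ℝ))
          (Matrix.fromCols A B)).mulVecLin) ⊓
      (⨆ i, WongW E A (0 : Matrix (Fin m) (Fin 1) ℝ) C i) ≤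
      LinearMap.ker K.mulVecLin) := by
  have h0 : 0 < n := hn
  set S := LinearMap.range (Fmat n (Matrix.fromCols E (0 : Matrix (Fin m) (Fin l) ℝ))
      (Matrix.fromCols A B)).mulVecLin with hSdef
  constructor
  · -- (ii) → (iii)
    intro hL v hv
    rw [Submodule.mem_inf] at hv
    obtain ⟨hvS, hvW⟩ := hv
    rw [Submodule.mem_comap] at hvS
    rw [wongW_sup E A C] at hvW
    obtain ⟨z, hz0, hz1, hz2, hz3⟩ := chain_exists E A C n v hvW
    set y : Fin n × Fin n → ℝ := fun q => z q.1.val q.2 with hy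
    have hyblock : ∀ i : Fin n, (fun j => y (i, j)) = z i.val := fun i => rfl
    have hy0 : (fun j => y (⟨0, h0⟩, j)) = v := by rw [hyblock, hz0]
    have hmem : y ∈ Submodule.comap (calA A).mulVecLin S ⊓
        LinearMap.ker (firstBlockCol n C).mulVecLin ⊓
        LinearMap.ker (Fmat n (Matrix.fromRows E (0 : Matrix (Fin p) (Fin n) ℝ))
          (Matrix.fromRows A C)).mulVecLin := by
      rw [Submodule.mem_inf, Submodule.mem_inf]
      refine ⟨⟨?_, ?_⟩, ?_⟩
      · rw [Submodule.mem_comap, Matrix.mulVecLin_apply, calA_mulVec h0, hy0,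
          ← Matrix.mulVecLin_apply]
        exact hvS
      · rw [LinearMap.mem_ker, Matrix.mulVecLin_apply, firstBlockCol_mulVec h0, hy0,
          ← hz0]
        exact hz1 0
      · rw [LinearMap.mem_ker, Matrix.mulVecLin_apply]
        funext q
        obtain ⟨i, c⟩ := q
        cases c with
        | inl a =>
            rw [fmat_mulVec]; simp only [Matrix.fromRows_mulVec, Sum.elim_inl, Sum.elim_inr]
            simp only [Sum.elim_inl, hyblock, Pi.zero_apply]
            split_ifs with h
            · have := congrFun (hz2 i.val) a
              simpa using this
            · have hzn : z (i.val + 1) = 0 := hz3 _ (by omega)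
              have := congrFun (hz2 i.val) a
              rw [hzn, Matrix.mulVec_zero] at this
              simpa using this
        | inr b =>
            rw [fmat_mulVec]; simp only [Matrix.fromRows_mulVec, Sum.elim_inl, Sum.elim_inr]
            simp only [Sum.elim_inr, hyblock, Pi.zero_apply, Matrix.zero_mulVec]
            split_ifs with h
            · have := congrFun (hz1 (i.val + 1)) b
              simpa using this
            · simp
    have hKy := hL hmem
    rw [LinearMap.mem_ker, Matrix.mulVecLin_apply, firstBlockCol_mulVec h0, hy0] at hKy
    rw [LinearMap.mem_ker, Matrix.mulVecLin_apply]
    exact hKy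
  · -- (iii) → (ii)
    intro hR y hy
    rw [Submodule.mem_inf, Submodule.mem_inf] at hy
    obtain ⟨⟨hyS, hyC⟩, hyF⟩ := hy
    rw [Submodule.mem_comap, Matrix.mulVecLin_apply, calA_mulVec h0,
      ← Matrix.mulVecLin_apply] at hyS
    rw [LinearMap.mem_ker, Matrix.mulVecLin_apply, firstBlockCol_mulVec h0] at hyC
    rw [LinearMap.mem_ker, Matrix.mulVecLin_apply] at hyF
    set v : Fin n → ℝ := fun j => y (⟨0, h0⟩, j) with hv
    set z : ℕ → Fin n → ℝ := fun i j => if h : i < n then y (⟨i, h⟩, j) else 0 with hz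
    have hzlt : ∀ (i : ℕ) (h : i < n), z i = fun j => y (⟨i, h⟩, j) := by
      intro i h; funext j; simp only [hz, dif_pos h]
    have hz3 : ∀ j, n ≤ j → z j = 0 := by
      intro j hj; funext j'; simp only [hz, dif_neg (by omega : ¬ j < n)]; rfl
    have hz0 : z 0 = v := hzlt 0 h0
    have hz1 : ∀ i, C.mulVec (z i) = 0 := by
      intro i
      by_cases h : i < n
      · rw [hzlt i h]
        match i, h with
        | 0, h => exact hyC
        | (i + 1), h =>
            funext b
            have := congrFun hyF (⟨i, by omega⟩, Sum.inr b)
            rw [fmat_mulVec] at this; simp only [Matrix.fromRows_mulVec, Sum.elim_inl, Sum.elim_inr] at this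
            simp only [Sum.elim_inr, Matrix.zero_mulVec, Pi.zero_apply, zero_add] at this
            rw [dif_pos (show (⟨i, by omega⟩ : Fin n).val + 1 < n from by
              simpa using h)] at this
            simpa using this
      · rw [hz3 i (by omega), Matrix.mulVec_zero]
    have hz2 : ∀ i, E.mulVec (z i) + A.mulVec (z (i + 1)) = 0 := by
      intro i
      by_cases h : i < n
      · funext a
        have := congrFun hyF (⟨i, h⟩, Sum.inl a)
        rw [fmat_mulVec] at this; simp only [Matrix.fromRows_mulVec, Sum.elim_inl, Sum.elim_inr] at this
        rw [hzlt i h]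
        by_cases h' : i + 1 < n
        · rw [dif_pos (show (⟨i, h⟩ : Fin n).val + 1 < n from by simpa using h')] at this
          rw [hzlt (i + 1) h']
          simpa using this
        · rw [dif_neg (show ¬ (⟨i, h⟩ : Fin n).val + 1 < n from by simpa using h')] at this
          rw [hz3 (i + 1) (by omega), Matrix.mulVec_zero]
          simpa using this
      · rw [hz3 i (by omega), hz3 (i + 1) (by omega), Matrix.mulVec_zero,
          Matrix.mulVec_zero, add_zero]
    have hvW : v ∈ ⨆ i, WongW E A (0 : Matrix (Fin m) (Fin 1) ℝ) C i := by
      have := chain_mem E A C n z hz1 hz2 0 (fun j hj => hz3 j (by omega))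
      rw [hz0] at this
      exact le_iSup (WongW E A (0 : Matrix (Fin m) (Fin 1) ℝ) C) n this
    have hKv := hR (Submodule.mem_inf.mpr ⟨Submodule.mem_comap.mpr hyS, hvW⟩)
    rw [LinearMap.mem_ker, Matrix.mulVecLin_apply] at hKv
    rw [LinearMap.mem_ker, Matrix.mulVecLin_apply, firstBlockCol_mulVec h0]
    exact hKv
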